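/- Comparison for the finite BBGKY hierarchy: let N ≥ 2 and let F^(k) : [0,∞)×[0,1]^k → [0,∞), 1 ≤ k ≤ N, be nonnegative continuous functions, with F^(k) :≡ 0 for k > N. For Φ : [0,1]^{k+1} → ℝ define R Φ(x_1,…,x_k) := Σ_{i=1}^k ∫_0^1 Φ(x_1,…,x_k,z) p(2/N²,x_i,z) dz, and for Φ : [0,1]^k → ℝ define Q Φ(x_1,…,x_k) := Σ_{1≤i<j≤k} Φ(x_1,…,x_k) p(2/N²,x_i,x_j). Suppose that for every 1 ≤ k ≤ N, t ≥ 0 and x⃗ ∈ [0,1]^k, F^(k)(t,x⃗) = P^(k)_t F^(k)(0,·)(x⃗) − ∫_0^t P^(k)_{t−s}( R F^(k+1)(s,·) + (1/N) Q F^(k)(s,·) )(x⃗) ds. Then F^(k)(t,x⃗) ≤ P^(k)_t F^(k)(0,·)(x⃗) for every 1 ≤ k ≤ N, t ≥ 0 and x⃗ ∈ [0,1]^k; in particular sup_{x⃗} F^(k)(t,x⃗) ≤ sup_{x⃗} F^(k)(0,x⃗). -/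

import Mathlib

open MeasureTheory Real
open scoped ENNReal

/-- Centered Gaussian density with variance `t`. -/
noncomputable def gaussD (t x : ℝ) : ℝ :=
  (2 * Real.pi * t) ^ (-(1:ℝ)/2) * Real.exp (-x ^ 2 / (2 * t))

/-- The Neumann heat kernel on `[0,1]` (transition density of reflected BM). -/
noncomputable def heatK (t x y : ℝ) : ℝ :=
  ∑' n : ℤ, (gaussD t (x - y + 2 * (n : ℝ)) + gaussD t (x + y + 2 * (n : ℝ)))

/-- The unit box `[0,1]^k`. -/
def unitBox (k : ℕ) : Set (Fin k → ℝ) := Set.univ.pi fun _ => Set.Icc (0:ℝ) 1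

/-- The `k`-fold Neumann heat semigroup:
`P^(k)_t Φ(x) = ∫_{[0,1]^k} Φ(y) ∏ᵢ p(t,xᵢ,yᵢ) dy` for `t > 0`, and `P^(k)_0 Φ = Φ`. -/
noncomputable def Ptk (k : ℕ) (t : ℝ) (Φ : (Fin k → ℝ) → ℝ) (x : Fin k → ℝ) : ℝ :=
  if t = 0 then Φ x else ∫ y in unitBox k, Φ y * ∏ i, heatK t (x i) (y i)

/-! ### Auxiliary lemmas -/

lemma gaussD_nonneg (t x : ℝ) : 0 ≤ gaussD t x := by
  unfold gaussD
  rcases lt_trichotomy (2 * Real.pi * t) 0 with h | h | h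
  · rw [Real.rpow_def_of_neg h]
    have : (-(1:ℝ)/2) * Real.pi = -(Real.pi/2) := by ring
    rw [this, Real.cos_neg, Real.cos_pi_div_two, mul_zero, zero_mul]
  · rw [h, Real.zero_rpow (by norm_num), zero_mul]
  · positivity

lemma heatK_nonneg (t x y : ℝ) : 0 ≤ heatK t x y :=
  tsum_nonneg fun _ => add_nonneg (gaussD_nonneg _ _) (gaussD_nonneg _ _)

lemma continuous_gaussD (t : ℝ) : Continuous (gaussD t) := by
  unfold gaussD
  exact continuous_const.mul (((continuous_pow 2).neg.div_const _).rexp)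

lemma gaussD_eq {t : ℝ} (ht : 0 < t) (x : ℝ) :
    gaussD t x = (Real.sqrt (2 * Real.pi * t))⁻¹ * Real.exp (-(1/(2*t)) * x ^ 2) := by
  have h2 : (0:ℝ) < 2 * Real.pi * t := by positivity
  unfold gaussD
  rw [show (-(1:ℝ)/2) = -(1/2) by ring, Real.rpow_neg h2.le, ← Real.sqrt_eq_rpow]
  congr 1
  rw [neg_div, neg_mul]
  congr 1
  field_simp

lemma integrable_gaussD {t : ℝ} (ht : 0 < t) : Integrable (gaussD t) := by
  have : Integrable fun x : ℝ => (Real.sqrt (2 * Real.pi * t))⁻¹ *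
      Real.exp (-(1/(2*t)) * x ^ 2) :=
    (integrable_exp_neg_mul_sq (by positivity)).const_mul _
  exact this.congr (Filter.Eventually.of_forall fun x => (gaussD_eq ht x).symm)

lemma integral_gaussD {t : ℝ} (ht : 0 < t) : ∫ x, gaussD t x = 1 := by
  have h2 : (0:ℝ) < 2 * Real.pi * t := by positivity
  have hb : (0:ℝ) < 1/(2*t) := by positivity
  calc ∫ x, gaussD t x
      = ∫ x, (Real.sqrt (2 * Real.pi * t))⁻¹ * Real.exp (-(1/(2*t)) * x ^ 2) := by
        congr 1; funext x; exact gaussD_eq ht x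
    _ = (Real.sqrt (2 * Real.pi * t))⁻¹ * ∫ x, Real.exp (-(1/(2*t)) * x ^ 2) := by
        rw [integral_const_mul]
    _ = (Real.sqrt (2 * Real.pi * t))⁻¹ * Real.sqrt (2 * Real.pi * t) := by
        rw [integral_gaussian]
        congr 2
        field_simp
    _ = 1 := inv_mul_cancel₀ (by positivity)

/-- Gaussian measure: the measure with density `gaussD t` w.r.t. Lebesgue. -/
noncomputable def gmeas (t : ℝ) : Measure ℝ :=
  volume.withDensity fun u => ENNReal.ofReal (gaussD t u)

lemma gmeas_apply (t : ℝ) {s : Set ℝ} (hs : MeasurableSet s) :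
    gmeas t s = ∫⁻ u in s, ENNReal.ofReal (gaussD t u) := by
  rw [gmeas, withDensity_apply _ hs]

lemma gmeas_univ {t : ℝ} (ht : 0 < t) : gmeas t Set.univ = 1 := by
  rw [gmeas_apply t MeasurableSet.univ, Measure.restrict_univ,
    ← ofReal_integral_eq_lintegral_ofReal (integrable_gaussD ht)
      (Filter.Eventually.of_forall fun x => gaussD_nonneg t x),
    integral_gaussD ht, ENNReal.ofReal_one]

lemma gmeas_Icc_eq_Ioc (t a b : ℝ) : gmeas t (Set.Icc a b) = gmeas t (Set.Ioc a b) := by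
  refine (measure_congr ?_).symm
  exact Filter.EventuallyEq.filter_mono Ioc_ae_eq_Icc
    (Measure.ae_le_iff_absolutelyContinuous.2 (withDensity_absolutelyContinuous _ _))

lemma lintegral_gauss_sub (t c : ℝ) :
    ∫⁻ y in Set.Icc (0:ℝ) 1, ENNReal.ofReal (gaussD t (c - y)) =
      gmeas t (Set.Icc (c-1) c) := by
  have hT : MeasurePreserving (fun y : ℝ => c + -y) volume volume :=
    MeasurePreserving.add_left volume c (Measure.measurePreserving_neg _)
  have hpre : (fun y : ℝ => c + -y) ⁻¹' Set.Icc (c-1) c = Set.Icc (0:ℝ) 1 := by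
    ext y
    simp only [Set.mem_preimage, Set.mem_Icc]
    constructor <;> intro h <;> constructor <;> linarith [h.1, h.2]
  have hf : Measurable fun u : ℝ => ENNReal.ofReal (gaussD t u) :=
    (continuous_gaussD t).measurable.ennreal_ofReal
  have := hT.setLIntegral_comp_preimage (measurableSet_Icc : MeasurableSet (Set.Icc (c-1) c)) hf
  rw [hpre] at this
  rw [gmeas_apply _ measurableSet_Icc, ← this]
  simp only [sub_eq_add_neg]

lemma lintegral_gauss_add (t c : ℝ) :
    ∫⁻ y in Set.Icc (0:ℝ) 1, ENNReal.ofReal (gaussD t (c + y)) =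
      gmeas t (Set.Icc c (c+1)) := by
  have hT : MeasurePreserving (fun y : ℝ => c + y) volume volume :=
    measurePreserving_add_left volume c
  have hpre : (fun y : ℝ => c + y) ⁻¹' Set.Icc c (c+1) = Set.Icc (0:ℝ) 1 := by
    ext y
    simp only [Set.mem_preimage, Set.mem_Icc]
    constructor <;> intro h <;> constructor <;> linarith [h.1, h.2]
  have hf : Measurable fun u : ℝ => ENNReal.ofReal (gaussD t u) :=
    (continuous_gaussD t).measurable.ennreal_ofReal
  have := hT.setLIntegral_comp_preimage (measurableSet_Icc : MeasurableSet (Set.Icc c (c+1))) hf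
  rw [hpre] at this
  rw [gmeas_apply _ measurableSet_Icc, ← this]

/-- The `ℝ≥0∞`-valued version of the heat kernel. -/
noncomputable def heatKE (t x y : ℝ) : ℝ≥0∞ :=
  ∑' n : ℤ, (ENNReal.ofReal (gaussD t (x - y + 2 * (n : ℝ)))
    + ENNReal.ofReal (gaussD t (x + y + 2 * (n : ℝ))))

lemma measurable_heatKE (t x : ℝ) : Measurable (heatKE t x) := by
  apply Measurable.ennreal_tsum
  intro n
  apply Measurable.fun_add
  · exact ((continuous_gaussD t).comp (by continuity)).measurable.ennreal_ofReal
  · exact ((continuous_gaussD t).comp (by continuity)).measurable.ennreal_ofReal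

lemma heatK_eq_toReal (t x y : ℝ) : heatK t x y = (heatKE t x y).toReal := by
  by_cases h : Summable fun n : ℤ =>
    gaussD t (x - y + 2 * (n : ℝ)) + gaussD t (x + y + 2 * (n : ℝ))
  · have : heatKE t x y = ENNReal.ofReal (heatK t x y) := by
      unfold heatK heatKE
      simp_rw [← ENNReal.ofReal_add (gaussD_nonneg _ _) (gaussD_nonneg _ _)]
      exact (ENNReal.ofReal_tsum_of_nonneg
        (fun n => add_nonneg (gaussD_nonneg _ _) (gaussD_nonneg _ _)) h).symm
    rw [this, ENNReal.toReal_ofReal (heatK_nonneg t x y)]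
  · have htop : heatKE t x y = ⊤ := by
      by_contra hne
      apply h
      have hs := ENNReal.summable_toReal (by unfold heatKE at hne; exact hne)
      refine hs.congr fun n => ?_
      rw [ENNReal.toReal_add ENNReal.ofReal_ne_top ENNReal.ofReal_ne_top,
        ENNReal.toReal_ofReal (gaussD_nonneg _ _), ENNReal.toReal_ofReal (gaussD_nonneg _ _)]
    unfold heatK
    rw [tsum_eq_zero_of_not_summable h, htop, ENNReal.toReal_top]

lemma measurable_heatK (t x : ℝ) : Measurable (heatK t x) := by
  simp_rw [funext fun y => heatK_eq_toReal t x y]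
  exact (measurable_heatKE t x).ennreal_toReal

lemma lintegral_heatKE {t : ℝ} (ht : 0 < t) (x : ℝ) :
    ∫⁻ y in Set.Icc (0:ℝ) 1, heatKE t x y = 1 := by
  have hmeas : ∀ n : ℤ, AEMeasurable (fun y : ℝ =>
      ENNReal.ofReal (gaussD t (x - y + 2 * (n : ℝ)))
        + ENNReal.ofReal (gaussD t (x + y + 2 * (n : ℝ))))
      (volume.restrict (Set.Icc (0:ℝ) 1)) := by
    intro n
    apply Measurable.aemeasurable
    apply Measurable.fun_add
    · exact ((continuous_gaussD t).comp (by continuity)).measurable.ennreal_ofReal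
    · exact ((continuous_gaussD t).comp (by continuity)).measurable.ennreal_ofReal
  calc ∫⁻ y in Set.Icc (0:ℝ) 1, heatKE t x y
      = ∑' n : ℤ, ∫⁻ y in Set.Icc (0:ℝ) 1,
          (ENNReal.ofReal (gaussD t (x - y + 2 * (n : ℝ)))
            + ENNReal.ofReal (gaussD t (x + y + 2 * (n : ℝ)))) := by
        unfold heatKE
        rw [← lintegral_tsum hmeas]
    _ = ∑' n : ℤ, gmeas t (Set.Ioc (x - 1 + 2 * (n : ℝ)) (x + 1 + 2 * (n : ℝ))) := by
        refine tsum_congr fun n => ?_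
        rw [lintegral_add_left]
        · have e1 : ∫⁻ y in Set.Icc (0:ℝ) 1,
              ENNReal.ofReal (gaussD t (x - y + 2 * (n : ℝ))) =
              gmeas t (Set.Icc (x + 2 * (n : ℝ) - 1) (x + 2 * (n : ℝ))) := by
            have := lintegral_gauss_sub t (x + 2 * (n : ℝ))
            rw [← this]
            congr 1; funext y; congr 2; ring
          have e2 : ∫⁻ y in Set.Icc (0:ℝ) 1,
              ENNReal.ofReal (gaussD t (x + y + 2 * (n : ℝ))) =
              gmeas t (Set.Icc (x + 2 * (n : ℝ)) (x + 2 * (n : ℝ) + 1)) := by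
            have := lintegral_gauss_add t (x + 2 * (n : ℝ))
            rw [← this]
            congr 1; funext y; congr 2; ring
          rw [e1, e2, gmeas_Icc_eq_Ioc, gmeas_Icc_eq_Ioc,
            ← measure_union (Set.Ioc_disjoint_Ioc_of_le le_rfl) measurableSet_Ioc,
            Set.Ioc_union_Ioc_eq_Ioc (by linarith) (by linarith)]
          congr 2 <;> ring
        · exact ((continuous_gaussD t).comp (by continuity)).measurable.ennreal_ofReal
    _ = gmeas t (⋃ n : ℤ, Set.Ioc (x - 1 + 2 * (n : ℝ)) (x + 1 + 2 * (n : ℝ))) := by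
        rw [measure_iUnion]
        · intro m n hmn
          rw [Function.onFun, Set.Ioc_disjoint_Ioc]
          rcases lt_or_gt_of_ne hmn with hlt | hlt
          · have : (m:ℝ) + 1 ≤ (n:ℝ) := by exact_mod_cast Int.add_one_le_iff.2 hlt
            refine le_trans (min_le_left _ _) (le_trans ?_ (le_max_right _ _))
            linarith
          · have : (n:ℝ) + 1 ≤ (m:ℝ) := by exact_mod_cast Int.add_one_le_iff.2 hlt
            refine le_trans (min_le_right _ _) (le_trans ?_ (le_max_left _ _))
            linarith
        · exact fun n => measurableSet_Ioc
    _ = 1 := by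
        rw [show (⋃ n : ℤ, Set.Ioc (x - 1 + 2 * (n : ℝ)) (x + 1 + 2 * (n : ℝ))) =
            Set.univ from ?_, gmeas_univ ht]
        ext u
        simp only [Set.mem_iUnion, Set.mem_Ioc, Set.mem_univ, iff_true]
        refine ⟨⌈(u - x - 1)/2⌉, ?_, ?_⟩
        · have h1 : (⌈(u - x - 1)/2⌉ : ℝ) < (u - x - 1)/2 + 1 := Int.ceil_lt_add_one _
          linarith
        · have h2 : (u - x - 1)/2 ≤ (⌈(u - x - 1)/2⌉ : ℝ) := Int.le_ceil _
          linarith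

lemma lintegral_ofReal_heatK_le {t : ℝ} (ht : 0 < t) (x : ℝ) :
    ∫⁻ y in Set.Icc (0:ℝ) 1, ENNReal.ofReal (heatK t x y) ≤ 1 := by
  refine le_trans (lintegral_mono fun y => ?_) (lintegral_heatKE ht x).le
  rw [heatK_eq_toReal]
  exact ENNReal.ofReal_toReal_le

lemma integrableOn_heatK {t : ℝ} (ht : 0 < t) (x : ℝ) :
    IntegrableOn (heatK t x) (Set.Icc (0:ℝ) 1) := by
  refine ⟨(measurable_heatK t x).aestronglyMeasurable, ?_⟩
  rw [hasFiniteIntegral_iff_norm]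
  have : ∀ y : ℝ, ENNReal.ofReal ‖heatK t x y‖ = ENNReal.ofReal (heatK t x y) := fun y => by
    rw [Real.norm_of_nonneg (heatK_nonneg t x y)]
  simp_rw [this]
  exact lt_of_le_of_lt (lintegral_ofReal_heatK_le ht x) ENNReal.one_lt_top

lemma setIntegral_heatK_nonneg (t x : ℝ) :
    0 ≤ ∫ y in Set.Icc (0:ℝ) 1, heatK t x y :=
  setIntegral_nonneg measurableSet_Icc fun y _ => heatK_nonneg t x y

lemma setIntegral_heatK_le_one {t : ℝ} (ht : 0 < t) (x : ℝ) :
    ∫ y in Set.Icc (0:ℝ) 1, heatK t x y ≤ 1 := by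
  rw [integral_eq_lintegral_of_nonneg_ae
    (Filter.Eventually.of_forall fun y => heatK_nonneg t x y)
    (measurable_heatK t x).aestronglyMeasurable]
  calc (∫⁻ y in Set.Icc (0:ℝ) 1, ENNReal.ofReal (heatK t x y)).toReal
      ≤ (1 : ℝ≥0∞).toReal :=
        ENNReal.toReal_mono ENNReal.one_ne_top (lintegral_ofReal_heatK_le ht x)
    _ = 1 := ENNReal.toReal_one

lemma measurableSet_unitBox (k : ℕ) : MeasurableSet (unitBox k) :=
  MeasurableSet.univ_pi fun _ => measurableSet_Icc

lemma indicator_prod (k : ℕ) (t : ℝ) (x y : Fin k → ℝ) :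
    ∏ i, (Set.Icc (0:ℝ) 1).indicator (heatK t (x i)) (y i) =
      (unitBox k).indicator (fun y => ∏ i, heatK t (x i) (y i)) y := by
  by_cases hy : y ∈ unitBox k
  · rw [Set.indicator_of_mem hy]
    refine Finset.prod_congr rfl fun i _ => ?_
    rw [Set.indicator_of_mem (hy i (Set.mem_univ i))]
  · rw [Set.indicator_of_notMem hy]
    obtain ⟨i, -, hi⟩ := by
      simpa only [unitBox, Set.mem_pi, not_forall] using hy
    exact Finset.prod_eq_zero (Finset.mem_univ i) (Set.indicator_of_notMem hi _)

lemma measurable_prodK (k : ℕ) (t : ℝ) (x : Fin k → ℝ) :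
    Measurable fun y : Fin k → ℝ => ∏ i, heatK t (x i) (y i) :=
  Finset.measurable_prod _ fun i _ => (measurable_heatK t (x i)).comp (measurable_pi_apply i)

lemma integrableOn_prodK {k : ℕ} {t : ℝ} (ht : 0 < t) (x : Fin k → ℝ) :
    IntegrableOn (fun y : Fin k → ℝ => ∏ i, heatK t (x i) (y i)) (unitBox k) := by
  rw [← integrable_indicator_iff (measurableSet_unitBox k)]
  have : (unitBox k).indicator (fun y : Fin k → ℝ => ∏ i, heatK t (x i) (y i)) =
      fun y : Fin k → ℝ => ∏ i, (Set.Icc (0:ℝ) 1).indicator (heatK t (x i)) (y i) :=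
    funext fun y => (indicator_prod k t x y).symm
  rw [this]
  exact Integrable.fintype_prod (𝕜 := ℝ) fun i =>
    (integrable_indicator_iff measurableSet_Icc).2 (integrableOn_heatK ht (x i))

lemma setIntegral_prodK_le_one {k : ℕ} {t : ℝ} (ht : 0 < t) (x : Fin k → ℝ) :
    ∫ y in unitBox k, ∏ i, heatK t (x i) (y i) ≤ 1 := by
  have heq : ∫ y in unitBox k, ∏ i, heatK t (x i) (y i) =
      ∏ i, ∫ u in Set.Icc (0:ℝ) 1, heatK t (x i) u := by
    rw [← integral_indicator (measurableSet_unitBox k)]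
    have : (unitBox k).indicator (fun y : Fin k → ℝ => ∏ i, heatK t (x i) (y i)) =
        fun y : Fin k → ℝ => ∏ i, (Set.Icc (0:ℝ) 1).indicator (heatK t (x i)) (y i) :=
      funext fun y => (indicator_prod k t x y).symm
    rw [this, MeasureTheory.volume_pi, MeasureTheory.integral_fintype_prod_eq_prod
      (fun i => (Set.Icc (0:ℝ) 1).indicator (heatK t (x i)))]
    exact Finset.prod_congr rfl fun i _ => integral_indicator measurableSet_Icc
  rw [heq]
  exact Finset.prod_le_one (fun i _ => setIntegral_heatK_nonneg t (x i))
    (fun i _ => setIntegral_heatK_le_one ht (x i))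

lemma Ptk_nonneg (k : ℕ) (τ : ℝ) (Φ : (Fin k → ℝ) → ℝ) (x : Fin k → ℝ)
    (hΦ : ∀ y ∈ unitBox k, 0 ≤ Φ y) (hx : x ∈ unitBox k) : 0 ≤ Ptk k τ Φ x := by
  unfold Ptk
  split
  · exact hΦ x hx
  · exact setIntegral_nonneg (measurableSet_unitBox k) fun y hy =>
      mul_nonneg (hΦ y hy) (Finset.prod_nonneg fun i _ => heatK_nonneg _ _ _)

lemma Ptk_le_sSup {k : ℕ} {t : ℝ} (ht : 0 ≤ t) {Φ : (Fin k → ℝ) → ℝ}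
    (hΦc : ContinuousOn Φ (unitBox k)) (hΦ0 : ∀ y ∈ unitBox k, 0 ≤ Φ y)
    {x : Fin k → ℝ} (hx : x ∈ unitBox k) :
    Ptk k t Φ x ≤ sSup (Φ '' unitBox k) := by
  have hcomp : IsCompact (unitBox k) := isCompact_univ_pi fun _ => isCompact_Icc
  have hbdd : BddAbove (Φ '' unitBox k) := (hcomp.image_of_continuousOn hΦc).bddAbove
  have hM : ∀ y ∈ unitBox k, Φ y ≤ sSup (Φ '' unitBox k) := fun y hy =>
    le_csSup hbdd (Set.mem_image_of_mem Φ hy)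
  set M := sSup (Φ '' unitBox k) with hMdef
  have hM0 : 0 ≤ M := le_trans (hΦ0 x hx) (hM x hx)
  unfold Ptk
  split
  · exact hM x hx
  · rename_i htne
    have ht' : 0 < t := lt_of_le_of_ne ht (Ne.symm htne)
    set g : (Fin k → ℝ) → ℝ := fun y => ∏ i, heatK t (x i) (y i) with hgdef
    have hg0 : ∀ y, 0 ≤ g y := fun y => Finset.prod_nonneg fun i _ => heatK_nonneg _ _ _
    have hgInt : IntegrableOn g (unitBox k) := integrableOn_prodK ht' x
    have hMgInt : IntegrableOn (fun y => M * g y) (unitBox k) := hgInt.const_mul M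
    have hΦgInt : IntegrableOn (fun y => Φ y * g y) (unitBox k) := by
      refine Integrable.mono' hMgInt ?_ ?_
      · exact (hΦc.aestronglyMeasurable (measurableSet_unitBox k)).mul
          (measurable_prodK k t x).aestronglyMeasurable
      · refine (ae_restrict_mem (measurableSet_unitBox k)).mono fun y hy => ?_
        rw [Real.norm_of_nonneg (mul_nonneg (hΦ0 y hy) (hg0 y))]
        exact mul_le_mul_of_nonneg_right (hM y hy) (hg0 y)
    calc ∫ y in unitBox k, Φ y * g y
        ≤ ∫ y in unitBox k, M * g y :=
          setIntegral_mono_on hΦgInt hMgInt (measurableSet_unitBox k) fun y hy =>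
            mul_le_mul_of_nonneg_right (hM y hy) (hg0 y)
      _ = M * ∫ y in unitBox k, g y := by rw [integral_const_mul]
      _ ≤ M * 1 := mul_le_mul_of_nonneg_left (setIntegral_prodK_le_one ht' x) hM0
      _ = M := mul_one M

lemma snoc_mem_unitBox {k : ℕ} {y : Fin k → ℝ} (hy : y ∈ unitBox k) {z : ℝ}
    (hz : z ∈ Set.Icc (0:ℝ) 1) : Fin.snoc y z ∈ unitBox (k+1) := by
  intro i _
  refine Fin.lastCases ?_ ?_ i
  · simpa [Fin.snoc_last] using hz
  · intro j
    simpa [Fin.snoc_castSucc] using hy j (Set.mem_univ j)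

/-- comparison for the finite BBGKY hierarchy: nonnegative solutions of
the `N`-particle hierarchy (with annihilation terms `R` and `Q`) are dominated by the
free heat flow of their initial data, and in particular by the sup of the initial data. -/
theorem finite_hierarchy_comparison :
    ∀ N : ℕ, 2 ≤ N →
      ∀ F : (k : ℕ) → ℝ → (Fin k → ℝ) → ℝ,
        (∀ k : ℕ, 1 ≤ k → k ≤ N →
          ContinuousOn (fun q : ℝ × (Fin k → ℝ) => F k q.1 q.2)
            (Set.Ici (0:ℝ) ×ˢ unitBox k)) →
        (∀ k : ℕ, 1 ≤ k → k ≤ N → ∀ t ∈ Set.Ici (0:ℝ), ∀ x ∈ unitBox k, 0 ≤ F k t x) →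
        (∀ k : ℕ, N < k → ∀ t : ℝ, ∀ x : Fin k → ℝ, F k t x = 0) →
        (∀ k : ℕ, 1 ≤ k → k ≤ N → ∀ t ∈ Set.Ici (0:ℝ), ∀ x ∈ unitBox k,
          F k t x = Ptk k t (F k 0) x
            - ∫ s in (0:ℝ)..t,
                Ptk k (t - s)
                  (fun y =>
                    (∑ i : Fin k, ∫ z in (0:ℝ)..1,
                      F (k+1) s (Fin.snoc y z) * heatK (2 / (N : ℝ) ^ 2) (y i) z)
                    + (1 / (N : ℝ)) * ∑ i : Fin k, ∑ j : Fin k,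
                        if i < j then F k s y * heatK (2 / (N : ℝ) ^ 2) (y i) (y j)
                        else 0) x) →
        ∀ k : ℕ, 1 ≤ k → k ≤ N → ∀ t ∈ Set.Ici (0:ℝ), ∀ x ∈ unitBox k,
          F k t x ≤ Ptk k t (F k 0) x ∧ F k t x ≤ sSup (F k 0 '' unitBox k) := by
  intro N hN F hcont hnn hzero heq k hk1 hkN t ht x hx
  -- nonnegativity of the collision operator applied to F at time u ∈ [0, t]
  have hΨ : ∀ u ∈ Set.Icc (0:ℝ) t, ∀ y ∈ unitBox k,
      0 ≤ (∑ i : Fin k, ∫ z in (0:ℝ)..1,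
            F (k+1) u (Fin.snoc y z) * heatK (2 / (N : ℝ) ^ 2) (y i) z)
          + (1 / (N : ℝ)) * ∑ i : Fin k, ∑ j : Fin k,
              if i < j then F k u y * heatK (2 / (N : ℝ) ^ 2) (y i) (y j) else 0 := by
    intro u hu y hy
    have hu0 : u ∈ Set.Ici (0:ℝ) := hu.1
    refine add_nonneg ?_ ?_
    · refine Finset.sum_nonneg fun i _ => ?_
      refine intervalIntegral.integral_nonneg zero_le_one fun z hz => ?_
      refine mul_nonneg ?_ (heatK_nonneg _ _ _)
      by_cases hkN' : k = N
      · rw [hzero (k+1) (by omega)]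
      · exact hnn (k+1) (by omega) (by omega) u hu0 _ (snoc_mem_unitBox hy hz)
    · refine mul_nonneg (by positivity) ?_
      refine Finset.sum_nonneg fun i _ => Finset.sum_nonneg fun j _ => ?_
      split
      · exact mul_nonneg (hnn k hk1 hkN u hu0 y hy) (heatK_nonneg _ _ _)
      · exact le_refl 0
  have hkey : F k t x ≤ Ptk k t (F k 0) x := by
    rw [heq k hk1 hkN t ht x hx]
    have hI : 0 ≤ ∫ s in (0:ℝ)..t,
        Ptk k (t - s)
          (fun y =>
            (∑ i : Fin k, ∫ z in (0:ℝ)..1,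
              F (k+1) s (Fin.snoc y z) * heatK (2 / (N : ℝ) ^ 2) (y i) z)
            + (1 / (N : ℝ)) * ∑ i : Fin k, ∑ j : Fin k,
                if i < j then F k s y * heatK (2 / (N : ℝ) ^ 2) (y i) (y j)
                else 0) x := by
      refine intervalIntegral.integral_nonneg ht fun u hu => ?_
      exact Ptk_nonneg k (t - u) _ x (fun y hy => hΨ u hu y hy) hx
    linarith
  refine ⟨hkey, hkey.trans ?_⟩
  have hΦc : ContinuousOn (F k 0) (unitBox k) := by
    have h1 := hcont k hk1 hkN
    have h2 : Continuous fun y : Fin k → ℝ => ((0:ℝ), y) :=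
      continuous_const.prodMk continuous_id
    have := h1.comp h2.continuousOn
      (fun y hy => Set.mk_mem_prod (Set.self_mem_Ici) hy)
    exact this
  exact Ptk_le_sSup ht hΦc (fun y hy => hnn k hk1 hkN 0 Set.self_mem_Ici y hy) hx
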